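/- For all integers p, q ≥ −1 and all paths u ∈ Λ_p(V,K), v ∈ Λ_q(V,K), the boundary operator satisfies the product rule ∂(uv) = (∂u)v + (−1)^{p+1} u(∂v) in Λ_{p+q}(V,K) (where a join with an element of Λ_{−2} = {0} is 0). -/

import Mathlib

noncomputable section

namespace Stmt0

variable (K : Type) [Field K] (V : Type) [Fintype V] [DecidableEq V]

/-- We represent the graded space `⊕_{p ≥ -1} Λ_p(V,K)` as functions on lists of
vertices: a list with `m` vertices represents an elementary `(m-1)`-path, the
empty list being the empty `(-1)`-path `e`, so that `Λ_p` is the subspace `Grade (p+1)`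
of functions supported on lists of length `p+1`. The join `uv` of `u ∈ Λ_p` and
`v ∈ Λ_q` (extending `e_x e_y = e_{xy}` bilinearly) is given on such graded
components by the convolution below. -/
def pjoin (u v : List V → K) : List V → K :=
  fun z => ∑ i ∈ Finset.range (z.length + 1), u (z.take i) * v (z.drop i)

/-- The boundary operator `∂`, the linear extension of
`∂ e_{i₀…i_p} = Σ_q (-1)^q e_{i₀…î_q…i_p}` (in coordinates,
`(∂v)^y = Σ_{q,k} (-1)^q v^{y with k inserted at position q}`); it maps
`Λ_p = Grade (p+1)` to `Λ_{p-1} = Grade p`, and vanishes on `Λ_{-1} = Grade 0`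
(that is, `∂` maps `Λ_{-1}` to `Λ_{-2} = {0}`). -/
def pbdry (v : List V → K) : List V → K :=
  fun y => ∑ q ∈ Finset.range (y.length + 1), ∑ k : V, ((-1 : K) ^ q) * v (y.insertIdx q k)

/-- `Grade m` is (the isomorphic copy of) `Λ_{m-1}(V,K)`: functions supported on
elementary paths with exactly `m` vertices. -/
def Grade (m : ℕ) : Set (List V → K) := {v | ∀ z : List V, z.length ≠ m → v z = 0}

theorem ins_eq {α : Type*} (l : List α) (a : α) (n : ℕ) (h : n ≤ l.length) :
    l.insertIdx n a = l.take n ++ a :: l.drop n := by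
  induction l generalizing n with
  | nil =>
    have : n = 0 := by simpa using h
    subst this; simp
  | cons x l ih =>
    cases n with
    | zero => simp
    | succ n =>
      simp only [List.insertIdx_succ_cons, List.take_succ_cons, List.drop_succ_cons,
        List.cons_append, List.cons.injEq, true_and]
      exact ih n (by simpa using h)

theorem take_ins_le {α : Type*} (l : List α) (a : α) {i q : ℕ} (hiq : i ≤ q) (hq : q ≤ l.length) :
    (l.insertIdx q a).take i = l.take i := by
  rw [ins_eq l a q hq, List.take_append, List.length_take, min_eq_left hq,
    Nat.sub_eq_zero_of_le hiq, List.take_zero, List.append_nil, List.take_take,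
    min_eq_left hiq]

theorem drop_ins_le {α : Type*} (l : List α) (a : α) {i q : ℕ} (hiq : i ≤ q) (hq : q ≤ l.length) :
    (l.insertIdx q a).drop i = (l.drop i).insertIdx (q - i) a := by
  rw [ins_eq l a q hq, List.drop_append, List.length_take, min_eq_left hq,
    Nat.sub_eq_zero_of_le hiq, List.drop_zero,
    ins_eq _ _ _ (by rw [List.length_drop]; omega), List.drop_take, List.drop_drop,
    (by omega : i + (q - i) = q)]

theorem take_ins_gt {α : Type*} (l : List α) (a : α) {i q : ℕ} (hiq : q < i) (hq : q ≤ l.length) :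
    (l.insertIdx q a).take i = (l.take (i - 1)).insertIdx q a := by
  rw [ins_eq l a q hq, List.take_append, List.take_take, List.length_take,
    min_eq_left hq, min_eq_right (le_of_lt hiq),
    ins_eq _ _ _ (by rw [List.length_take]; omega),
    List.take_take, min_eq_left (by omega : q ≤ i - 1), List.drop_take]
  have : i - q = (i - 1 - q) + 1 := by omega
  rw [this, List.take_succ_cons]

theorem drop_ins_gt {α : Type*} (l : List α) (a : α) {i q : ℕ} (hiq : q < i) (hq : q ≤ l.length) :
    (l.insertIdx q a).drop i = l.drop (i - 1) := by
  rw [ins_eq l a q hq, List.drop_append, List.length_take, min_eq_left hq,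
    List.drop_eq_nil_of_le (by rw [List.length_take, min_eq_left hq]; omega), List.nil_append]
  have : i - q = (i - 1 - q) + 1 := by omega
  rw [this, List.drop_succ_cons, List.drop_drop]
  congr 1
  omega

/-- For all integers `p, q ≥ −1` (here `m = p + 1`, `n = q + 1`
range over `ℕ`) and all paths `u ∈ Λ_p(V,K)`, `v ∈ Λ_q(V,K)`, the boundary
operator satisfies the product rule `∂(uv) = (∂u)v + (−1)^{p+1} u (∂v)` in
`Λ_{p+q}(V,K)` (a join with an element of `Λ_{-2} = {0}` being `0`: indeed
`∂u = 0` when `u ∈ Λ_{-1} = Grade 0`). -/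
theorem boundary_join_product_rule (m n : ℕ) (u v : List V → K)
    (hu : u ∈ Grade K V m) (hv : v ∈ Grade K V n) :
    pbdry K V (pjoin K V u v)
      = pjoin K V (pbdry K V u) v + ((-1 : K) ^ m) • pjoin K V u (pbdry K V v) := by
  funext y
  simp only [pbdry, pjoin, Pi.add_apply, Pi.smul_apply, smul_eq_mul]
  set L := y.length with hL
  have tri : ∀ (F : ℕ → ℕ → K),
      (∑ q ∈ Finset.range (L+1), ∑ i ∈ Finset.Ico q (L+1), F q i)
        = ∑ i ∈ Finset.range (L+1), ∑ q ∈ Finset.range (i+1), F q i := by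
    intro F
    rw [Finset.range_eq_Ico, Finset.sum_Ico_Ico_comm]
    simp only [Finset.range_eq_Ico]
  have reidx : ∀ (g : ℕ → K) (q : ℕ),
      (∑ i ∈ Finset.Ico (q+1) (L+2), g i) = ∑ i ∈ Finset.Ico q (L+1), g (i+1) := by
    intro g q
    rw [Finset.sum_Ico_eq_sum_range, Finset.sum_Ico_eq_sum_range,
      (by omega : L + 2 - (q+1) = L + 1 - q)]
    exact Finset.sum_congr rfl fun k _ => by rw [Nat.add_right_comm]
  have hB : (∑ q ∈ Finset.range (L + 1), ∑ k : V,
        (-1 : K) ^ q * ∑ i ∈ Finset.Ico (q + 1) (L + 2),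
          u ((y.take (i - 1)).insertIdx q k) * v (y.drop (i - 1)))
      = ∑ i ∈ Finset.range (L + 1),
          (∑ q ∈ Finset.range ((y.take i).length + 1), ∑ k : V,
            (-1 : K) ^ q * u ((y.take i).insertIdx q k)) * v (y.drop i) := by
    calc (∑ q ∈ Finset.range (L + 1), ∑ k : V,
            (-1 : K) ^ q * ∑ i ∈ Finset.Ico (q + 1) (L + 2),
              u ((y.take (i - 1)).insertIdx q k) * v (y.drop (i - 1)))
        = ∑ q ∈ Finset.range (L + 1), ∑ i ∈ Finset.Ico q (L+1), ∑ k : V,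
            (-1 : K) ^ q * (u ((y.take i).insertIdx q k) * v (y.drop i)) := by
          refine Finset.sum_congr rfl fun q _ => ?_
          rw [show (∑ k : V, (-1 : K) ^ q * ∑ i ∈ Finset.Ico (q + 1) (L + 2),
              u ((y.take (i - 1)).insertIdx q k) * v (y.drop (i - 1)))
            = ∑ k : V, ∑ i ∈ Finset.Ico q (L+1),
              (-1 : K) ^ q * (u ((y.take i).insertIdx q k) * v (y.drop i)) from
            Finset.sum_congr rfl fun k _ => by
              rw [reidx, Finset.mul_sum]
              exact Finset.sum_congr rfl fun i _ => by rw [Nat.add_sub_cancel]]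
          exact Finset.sum_comm
      _ = ∑ i ∈ Finset.range (L+1), ∑ q ∈ Finset.range (i+1), ∑ k : V,
            (-1 : K) ^ q * (u ((y.take i).insertIdx q k) * v (y.drop i)) := tri _
      _ = _ := by
          refine Finset.sum_congr rfl fun i hi => ?_
          have hi' : i ≤ L := by exact Nat.lt_succ_iff.mp (Finset.mem_range.mp hi)
          rw [Finset.sum_mul, List.length_take, min_eq_left hi']
          refine Finset.sum_congr rfl fun q _ => ?_
          rw [Finset.sum_mul]
          exact Finset.sum_congr rfl fun k _ => by ring
  have hA : (∑ q ∈ Finset.range (L + 1), ∑ k : V,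
        (-1 : K) ^ q * ∑ i ∈ Finset.range (q + 1),
          u (y.take i) * v ((y.drop i).insertIdx (q - i) k))
      = (-1 : K) ^ m * ∑ i ∈ Finset.range (L + 1),
          u (y.take i) * ∑ q ∈ Finset.range ((y.drop i).length + 1), ∑ k : V,
            (-1 : K) ^ q * v ((y.drop i).insertIdx q k) := by
    calc (∑ q ∈ Finset.range (L + 1), ∑ k : V,
            (-1 : K) ^ q * ∑ i ∈ Finset.range (q + 1),
              u (y.take i) * v ((y.drop i).insertIdx (q - i) k))
        = ∑ q ∈ Finset.range (L + 1), ∑ i ∈ Finset.range (q + 1), ∑ k : V,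
            (-1 : K) ^ q * (u (y.take i) * v ((y.drop i).insertIdx (q - i) k)) := by
          refine Finset.sum_congr rfl fun q _ => ?_
          simp only [Finset.mul_sum]
          exact Finset.sum_comm
      _ = ∑ i ∈ Finset.range (L + 1), ∑ q ∈ Finset.Ico i (L+1), ∑ k : V,
            (-1 : K) ^ q * (u (y.take i) * v ((y.drop i).insertIdx (q - i) k)) :=
          (tri _).symm
      _ = ∑ i ∈ Finset.range (L + 1), ∑ r ∈ Finset.range (L + 1 - i), ∑ k : V,
            (-1 : K) ^ (i + r) * (u (y.take i) * v ((y.drop i).insertIdx (i + r - i) k)) := by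
          exact Finset.sum_congr rfl fun i _ => Finset.sum_Ico_eq_sum_range _ _ _
      _ = ∑ i ∈ Finset.range (L + 1), (-1 : K) ^ i *
            (u (y.take i) * ∑ r ∈ Finset.range (L + 1 - i), ∑ k : V,
              (-1 : K) ^ r * v ((y.drop i).insertIdx r k)) := by
          refine Finset.sum_congr rfl fun i _ => ?_
          simp only [pow_add, Nat.add_sub_cancel_left, Finset.mul_sum]
          exact Finset.sum_congr rfl fun r _ => Finset.sum_congr rfl fun k _ => by ring
      _ = ∑ i ∈ Finset.range (L + 1), (-1 : K) ^ m *
            (u (y.take i) * ∑ r ∈ Finset.range (L + 1 - i), ∑ k : V,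
              (-1 : K) ^ r * v ((y.drop i).insertIdx r k)) := by
          refine Finset.sum_congr rfl fun i hi => ?_
          by_cases him : i = m
          · rw [him]
          · have hi' : i ≤ L := by exact Nat.lt_succ_iff.mp (Finset.mem_range.mp hi)
            have hzero : u (y.take i) = 0 := hu _ (by rw [List.length_take, min_eq_left hi']; exact him)
            rw [hzero, zero_mul, mul_zero, mul_zero]
      _ = _ := by
          rw [← Finset.mul_sum]
          congr 1
          refine Finset.sum_congr rfl fun i hi => ?_
          have hi' : i ≤ L := by exact Nat.lt_succ_iff.mp (Finset.mem_range.mp hi)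
          rw [List.length_drop, ← hL, (by omega : L - i + 1 = L + 1 - i)]
  calc (∑ q ∈ Finset.range (L + 1), ∑ k : V, (-1 : K) ^ q *
          ∑ i ∈ Finset.range ((y.insertIdx q k).length + 1),
            u ((y.insertIdx q k).take i) * v ((y.insertIdx q k).drop i))
      = ∑ q ∈ Finset.range (L + 1), ∑ k : V,
          ((-1 : K) ^ q * ∑ i ∈ Finset.range (q + 1),
              u (y.take i) * v ((y.drop i).insertIdx (q - i) k)
           + (-1 : K) ^ q * ∑ i ∈ Finset.Ico (q + 1) (L + 2),
              u ((y.take (i - 1)).insertIdx q k) * v (y.drop (i - 1))) := by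
        refine Finset.sum_congr rfl fun q hq => Finset.sum_congr rfl fun k _ => ?_
        have hqL : q ≤ L := Nat.lt_succ_iff.mp (Finset.mem_range.mp hq)
        rw [List.length_insertIdx_of_le_length hqL k, Finset.range_eq_Ico,
          ← Finset.sum_Ico_consecutive _ (Nat.zero_le (q+1)) (by omega : q+1 ≤ L+2),
          ← Finset.range_eq_Ico, mul_add]
        congr 1
        · congr 1
          refine Finset.sum_congr rfl fun i hi => ?_
          have hi' : i ≤ q := Nat.lt_succ_iff.mp (Finset.mem_range.mp hi)
          rw [take_ins_le y k hi' hqL, drop_ins_le y k hi' hqL]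
        · congr 1
          refine Finset.sum_congr rfl fun i hi => ?_
          have hi' : q < i := (Finset.mem_Ico.mp hi).1
          rw [take_ins_gt y k hi' hqL, drop_ins_gt y k hi' hqL]
    _ = (∑ q ∈ Finset.range (L + 1), ∑ k : V,
          (-1 : K) ^ q * ∑ i ∈ Finset.range (q + 1),
              u (y.take i) * v ((y.drop i).insertIdx (q - i) k))
        + ∑ q ∈ Finset.range (L + 1), ∑ k : V,
          (-1 : K) ^ q * ∑ i ∈ Finset.Ico (q + 1) (L + 2),
              u ((y.take (i - 1)).insertIdx q k) * v (y.drop (i - 1)) := by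
        simp only [Finset.sum_add_distrib]
    _ = _ := by rw [hA, hB, add_comm]



end Stmt0
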